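/- Retirement program equivalence: a contract with retirement (s,p) is optimal with retirement if and only if p is given by (R-P*) and s maximizes s_1, i.e. for every nondecreasing sequence s′ : {0,…,K} → [0,1] with s′_0 = 0 satisfying (R-BE), one has s′_1 ≤ s_1, and s itself is nondecreasing with s_0 = 0 and satisfies (R-BE). -/

import Mathlib

open Set Filter

/-- Principal's continuation value in the retirement model:
`Π^R_t(s,p) = Σ_{τ=t}^{K−1} δ^{τ−t}(π(s_τ) − p_τ) − δ^{K−1−t}·C(s_K)`. -/
noncomputable def PiR (δ : ℝ) (π C : ℝ → ℝ) (K : ℕ) (s p : ℕ → ℝ) (t : ℕ) : ℝ :=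
  (∑ τ ∈ Finset.Ico t K, δ ^ (τ - t) * (π (s τ) - p τ)) - δ ^ (K - 1 - t) * C (s K)

/-- Expert's continuation value in the retirement model:
`W^R_t(s,p) = Σ_{τ=t}^{K−1} δ^{τ−t}(w(s_τ) + p_τ)`. -/
noncomputable def WR (δ : ℝ) (w : ℝ → ℝ) (K : ℕ) (s p : ℕ → ℝ) (t : ℕ) : ℝ :=
  ∑ τ ∈ Finset.Ico t K, δ ^ (τ - t) * (w (s τ) + p τ)

/-- Implementability in the retirement model: feasibility plus (R-P-IC) and (R-E-IC). -/
def ImplementableR (δ : ℝ) (π w C : ℝ → ℝ) (K : ℕ) (s p : ℕ → ℝ) : Prop :=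
  (∀ t ≤ K, s t ∈ Set.Icc (0 : ℝ) 1) ∧ s 0 = 0 ∧
  (∀ t < K, s t ≤ s (t + 1)) ∧ (∀ t < K, 0 ≤ p t) ∧
  (∀ t < K,
    (1 - δ ^ (K - t)) * π (s t) / (1 - δ) - δ ^ (K - 1 - t) * C (s t)
      ≤ PiR δ π C K s p t) ∧
  (∀ t : ℕ, t + 1 < K →
    (1 - δ ^ (K - t - 1)) * w (s t) / (1 - δ) ≤ WR δ w K s p (t + 1))

/-- Optimality in the retirement model. -/
def OptimalR (δ : ℝ) (π w C : ℝ → ℝ) (K : ℕ) (s p : ℕ → ℝ) : Prop :=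
  ImplementableR δ π w C K s p ∧
  ∀ s' p' : ℕ → ℝ, ImplementableR δ π w C K s' p' →
    PiR δ π C K s' p' 0 ≤ PiR δ π C K s p 0

/-- The retirement break-even condition (R-BE), for every `t ∈ {1,…,K−1}`. -/
def RBE (δ : ℝ) (π w C : ℝ → ℝ) (K : ℕ) (s : ℕ → ℝ) : Prop :=
  ∀ t : ℕ, 1 ≤ t → t ≤ K - 1 →
    (δ - δ ^ (K - t)) * (π (s (t + 1)) - π (s t)) / (1 - δ)
        + δ ^ (K - 1 - t) * (C (s t) - C (s (t + 1)))
      = (1 - δ ^ (K - t)) * (w (s (t - 1)) - w (s t)) / (1 - δ)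

/-- The frontloaded payment scheme (R-P*) in the retirement model. -/
def RPstar (δ : ℝ) (w : ℝ → ℝ) (K : ℕ) (s p : ℕ → ℝ) : Prop :=
  p 0 = 0 ∧ ∀ t : ℕ, 1 ≤ t → t ≤ K - 1 →
    p t = (1 - δ ^ (K - t)) * (w (s (t - 1)) - w (s t)) / (1 - δ)

namespace Retire

noncomputable def q (δ : ℝ) (n : ℕ) : ℝ := ∑ i ∈ Finset.range n, δ ^ i

noncomputable def pstar (δ : ℝ) (w : ℝ → ℝ) (K : ℕ) (s : ℕ → ℝ) : ℕ → ℝ :=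
  fun t => if t = 0 then 0 else q δ (K - t) * (w (s (t - 1)) - w (s t))

noncomputable def dev (δ : ℝ) (π C : ℝ → ℝ) (K : ℕ) (s : ℕ → ℝ) (t : ℕ) : ℝ :=
  q δ (K - t) * π (s t) - δ ^ (K - 1 - t) * C (s t)

noncomputable def Af (δ : ℝ) (π w C : ℝ → ℝ) (K : ℕ) (s : ℕ → ℝ) (t : ℕ) : ℝ :=
  PiR δ π C K s (pstar δ w K s) t - dev δ π C K s t

noncomputable def Bf (δ : ℝ) (π w C : ℝ → ℝ) (K : ℕ) (s : ℕ → ℝ) (t : ℕ) : ℝ :=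
  δ * q δ (K - t - 1) * (π (s (t + 1)) - π (s t))
    + δ ^ (K - 1 - t) * (C (s t) - C (s (t + 1))) - pstar δ w K s t

noncomputable def Aex (δ : ℝ) (π w C : ℝ → ℝ) (K : ℕ) (s : ℕ → ℝ) (t : ℕ) : ℝ :=
  (∑ τ ∈ Finset.Ico t K, δ ^ (τ - t) * (π (s τ) + w (s τ)))
    - δ ^ (K - 1 - t) * C (s K) - q δ (K - t) * w (s (t - 1)) - q δ (K - t) * π (s t)
    + δ ^ (K - 1 - t) * C (s t)

noncomputable def Vex (δ : ℝ) (π w C : ℝ → ℝ) (K : ℕ) (s : ℕ → ℝ) : ℝ :=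
  (∑ τ ∈ Finset.range K, δ ^ τ * (π (s τ) + w (s τ)))
    - δ ^ (K - 1) * C (s K) - q δ K * w (s 0)

lemma q_nonneg {δ : ℝ} (hδ : 0 ≤ δ) (n : ℕ) : 0 ≤ q δ n :=
  Finset.sum_nonneg fun i _ => pow_nonneg hδ i

lemma q_succ (δ : ℝ) (n : ℕ) : q δ (n + 1) = 1 + δ * q δ n := by
  unfold q
  rw [Finset.sum_range_succ', Finset.mul_sum]
  simp [pow_succ, mul_comm, add_comm]

lemma q_pos {δ : ℝ} (hδ : 0 < δ) {n : ℕ} (hn : 1 ≤ n) : 0 < q δ n := by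
  obtain ⟨m, rfl⟩ := Nat.exists_eq_add_of_le hn
  rw [show 1 + m = m + 1 by omega, q_succ]
  have := q_nonneg hδ.le (δ := δ) m
  nlinarith

lemma q_eq (δ : ℝ) (n : ℕ) : (1 - δ) * q δ n = 1 - δ ^ n := by
  have := geom_sum_mul δ n
  unfold q
  linarith [this]

lemma bound_eq {δ : ℝ} (hδ : δ ≠ 1) (n : ℕ) (c : ℝ) :
    (1 - δ ^ n) * c / (1 - δ) = q δ n * c := by
  have h1 : (1 : ℝ) - δ ≠ 0 := sub_ne_zero.mpr (Ne.symm hδ)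
  rw [← q_eq δ n]
  field_simp

lemma WR_K (δ : ℝ) (w : ℝ → ℝ) (K : ℕ) (s p : ℕ → ℝ) : WR δ w K s p K = 0 := by
  simp [WR]

lemma WR_rec (δ : ℝ) (w : ℝ → ℝ) (K : ℕ) (s p : ℕ → ℝ) {t : ℕ} (h : t < K) :
    WR δ w K s p t = w (s t) + p t + δ * WR δ w K s p (t + 1) := by
  unfold WR
  rw [Finset.sum_eq_sum_Ico_succ_bot h]
  have hc : ∀ τ ∈ Finset.Ico (t + 1) K, δ ^ (τ - t) * (w (s τ) + p τ)
      = δ * (δ ^ (τ - (t + 1)) * (w (s τ) + p τ)) := by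
    intro τ hτ
    have hτ1 : t + 1 ≤ τ := (Finset.mem_Ico.mp hτ).1
    rw [show τ - t = (τ - (t + 1)) + 1 by omega, pow_succ]
    ring
  rw [Finset.sum_congr rfl hc, ← Finset.mul_sum, Nat.sub_self, pow_zero]
  ring

lemma PiR_rec (δ : ℝ) (π C : ℝ → ℝ) (K : ℕ) (s p : ℕ → ℝ) {t : ℕ} (h : t + 1 < K) :
    PiR δ π C K s p t = π (s t) - p t + δ * PiR δ π C K s p (t + 1) := by
  unfold PiR
  rw [Finset.sum_eq_sum_Ico_succ_bot (by omega : t < K)]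
  have hc : ∀ τ ∈ Finset.Ico (t + 1) K, δ ^ (τ - t) * (π (s τ) - p τ)
      = δ * (δ ^ (τ - (t + 1)) * (π (s τ) - p τ)) := by
    intro τ hτ
    have hτ1 : t + 1 ≤ τ := (Finset.mem_Ico.mp hτ).1
    rw [show τ - t = (τ - (t + 1)) + 1 by omega, pow_succ]
    ring
  rw [Finset.sum_congr rfl hc, ← Finset.mul_sum, Nat.sub_self, pow_zero,
    show K - 1 - t = (K - 1 - (t + 1)) + 1 by omega, pow_succ]
  ring

lemma PiR_last (δ : ℝ) (π C : ℝ → ℝ) {K : ℕ} (hK : 1 ≤ K) (s p : ℕ → ℝ) :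
    PiR δ π C K s p (K - 1) = π (s (K - 1)) - p (K - 1) - C (s K) := by
  unfold PiR
  rw [Finset.sum_eq_sum_Ico_succ_bot (by omega : K - 1 < K),
    show K - 1 + 1 = K by omega, Finset.Ico_self, Finset.sum_empty,
    Nat.sub_self, pow_zero]
  ring

lemma sum_PW (δ : ℝ) (π w C : ℝ → ℝ) (K : ℕ) (s p : ℕ → ℝ) (t : ℕ) :
    PiR δ π C K s p t + WR δ w K s p t
      = (∑ τ ∈ Finset.Ico t K, δ ^ (τ - t) * (π (s τ) + w (s τ)))
          - δ ^ (K - 1 - t) * C (s K) := by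
  unfold PiR WR
  rw [sub_add_eq_add_sub, ← Finset.sum_add_distrib]
  congr 1
  apply Finset.sum_congr rfl
  intro τ _
  ring

lemma WR_pstar_aux (δ : ℝ) (w : ℝ → ℝ) (K : ℕ) (s : ℕ → ℝ) :
    ∀ n, n ≤ K - 1 → WR δ w K s (pstar δ w K s) (K - n) = q δ n * w (s (K - n - 1)) := by
  intro n
  induction n with
  | zero => intro _; simp [WR, q]
  | succ m ih =>
    intro hm
    have hK2 : m + 2 ≤ K := by omega
    rw [WR_rec δ w K s _ (by omega : K - (m + 1) < K),
      show K - (m + 1) + 1 = K - m by omega, ih (by omega)]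
    have hne : K - (m + 1) ≠ 0 := by omega
    rw [show pstar δ w K s (K - (m + 1))
        = q δ (m + 1) * (w (s (K - (m + 1) - 1)) - w (s (K - (m + 1)))) by
      unfold pstar
      rw [if_neg hne, show K - (K - (m + 1)) = m + 1 by omega]]
    rw [show K - m - 1 = K - (m + 1) by omega, q_succ]
    ring

lemma WR_pstar (δ : ℝ) (w : ℝ → ℝ) (K : ℕ) (s : ℕ → ℝ) {t : ℕ} (h1 : 1 ≤ t) (h2 : t ≤ K) :
    WR δ w K s (pstar δ w K s) t = q δ (K - t) * w (s (t - 1)) := by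
  have := WR_pstar_aux δ w K s (K - t) (by omega)
  rw [show K - (K - t) = t by omega] at this
  exact this

lemma Af_last (δ : ℝ) (π w C : ℝ → ℝ) {K : ℕ} (hK : 2 ≤ K) (s : ℕ → ℝ) :
    Af δ π w C K s (K - 1) = C (s (K - 1)) - C (s K) - pstar δ w K s (K - 1) := by
  unfold Af dev
  rw [PiR_last δ π C (by omega) s, show K - (K - 1) = 1 by omega,
    show K - 1 - (K - 1) = 0 by omega, pow_zero]
  have : q δ 1 = 1 := by simp [q]
  rw [this]
  ring

lemma Af_last_eq_Bf (δ : ℝ) (π w C : ℝ → ℝ) {K : ℕ} (hK : 2 ≤ K) (s : ℕ → ℝ) :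
    Af δ π w C K s (K - 1) = Bf δ π w C K s (K - 1) := by
  rw [Af_last δ π w C hK s]
  unfold Bf
  rw [show K - (K - 1) - 1 = 0 by omega, show K - 1 - (K - 1) = 0 by omega, pow_zero,
    show K - 1 + 1 = K by omega]
  have : q δ 0 = 0 := by simp [q]
  rw [this]
  ring

lemma Af_rec (δ : ℝ) (π w C : ℝ → ℝ) {K : ℕ} (s : ℕ → ℝ) {t : ℕ} (h : t + 2 ≤ K) :
    Af δ π w C K s t = δ * Af δ π w C K s (t + 1) + Bf δ π w C K s t := by
  obtain ⟨n, hn⟩ : ∃ n, K - t = n + 2 := ⟨K - t - 2, by omega⟩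
  unfold Af Bf dev
  rw [PiR_rec δ π C K s _ (by omega : t + 1 < K)]
  rw [show K - t - 1 = n + 1 by omega, show K - (t + 1) = n + 1 by omega,
    show K - 1 - t = n + 1 by omega, show K - 1 - (t + 1) = n by omega,
    show K - t = (n + 1) + 1 by omega, q_succ δ (n + 1)]
  ring

lemma delta_pow (δ : ℝ) (n : ℕ) : δ - δ ^ (n + 1) = (1 - δ) * (δ * q δ n) := by
  linear_combination (-δ) * q_eq δ n

lemma RBE_iff {δ : ℝ} (hδ : δ ≠ 1) (π w C : ℝ → ℝ) (K : ℕ) (s : ℕ → ℝ) :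
    RBE δ π w C K s ↔ ∀ t, 1 ≤ t → t ≤ K - 1 → Bf δ π w C K s t = 0 := by
  have h1 : (1 : ℝ) - δ ≠ 0 := sub_ne_zero.mpr (Ne.symm hδ)
  unfold RBE
  apply forall_congr'; intro t
  by_cases h1t : 1 ≤ t
  · by_cases h2t : t ≤ K - 1
    · simp only [h1t, h2t, forall_true_left]
      have hq1 : δ - δ ^ (K - t) = (1 - δ) * (δ * q δ (K - t - 1)) := by
        have := delta_pow δ (K - t - 1)
        rwa [show K - t - 1 + 1 = K - t by omega] at this
      have hq2 : (1 : ℝ) - δ ^ (K - t) = (1 - δ) * q δ (K - t) := (q_eq δ (K - t)).symm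
      rw [hq1, hq2, mul_assoc ((1 : ℝ) - δ), mul_assoc ((1 : ℝ) - δ),
        mul_div_cancel_left₀ _ h1, mul_div_cancel_left₀ _ h1]
      unfold Bf pstar
      rw [if_neg (by omega : ¬ t = 0)]
      constructor
      · intro hh; linarith [hh]
      · intro hh; linarith [hh]
    · simp [h2t]
  · simp [h1t]

lemma Bf_to_Af (δ : ℝ) (π w C : ℝ → ℝ) {K : ℕ} (hK : 2 ≤ K) (s : ℕ → ℝ)
    (hB : ∀ t, 1 ≤ t → t ≤ K - 1 → Bf δ π w C K s t = 0) :
    ∀ t, 1 ≤ t → t ≤ K - 1 → Af δ π w C K s t = 0 := by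
  have aux : ∀ n, n ≤ K - 2 → Af δ π w C K s (K - 1 - n) = 0 := by
    intro n
    induction n with
    | zero =>
      intro _
      simpa using (Af_last_eq_Bf δ π w C hK s).trans (hB (K - 1) (by omega) le_rfl)
    | succ m ih =>
      intro hm
      have ht : K - 1 - (m + 1) + 2 ≤ K := by omega
      rw [show K - 1 - (m + 1) = K - 1 - (m + 1) by rfl]
      rw [Af_rec δ π w C s ht, show K - 1 - (m + 1) + 1 = K - 1 - m by omega,
        ih (by omega), hB _ (by omega) (by omega)]
      ring
  intro t h1t h2t
  have := aux (K - 1 - t) (by omega)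
  rwa [show K - 1 - (K - 1 - t) = t by omega] at this

lemma Af_to_Bf (δ : ℝ) (π w C : ℝ → ℝ) {K : ℕ} (hK : 2 ≤ K) (s : ℕ → ℝ)
    (hA : ∀ t, 1 ≤ t → t ≤ K - 1 → Af δ π w C K s t = 0) :
    ∀ t, 1 ≤ t → t ≤ K - 1 → Bf δ π w C K s t = 0 := by
  intro t h1t h2t
  rcases eq_or_lt_of_le h2t with rfl | hlt
  · rw [← Af_last_eq_Bf δ π w C hK s]
    exact hA _ h1t le_rfl
  · have hrec := Af_rec δ π w C s (by omega : t + 2 ≤ K)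
    rw [hA t h1t h2t, hA (t + 1) (by omega) (by omega)] at hrec
    linarith

lemma pstar_nonneg {δ : ℝ} (hδ : 0 ≤ δ) {w : ℝ → ℝ} {K : ℕ} {s : ℕ → ℝ}
    (hwa : StrictAntiOn w (Set.Icc 0 1))
    (hb : ∀ t ≤ K, s t ∈ Set.Icc (0 : ℝ) 1) (hmono : ∀ t < K, s t ≤ s (t + 1))
    {t : ℕ} (ht : t < K) : 0 ≤ pstar δ w K s t := by
  unfold pstar
  split_ifs with h
  · exact le_refl 0
  · have h1t : 1 ≤ t := by omega
    have hle : s (t - 1) ≤ s t := by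
      have := hmono (t - 1) (by omega)
      rwa [show t - 1 + 1 = t by omega] at this
    have hw : w (s t) ≤ w (s (t - 1)) :=
      hwa.antitoneOn (hb (t - 1) (by omega)) (hb t (by omega)) hle
    exact mul_nonneg (q_nonneg hδ _) (by linarith)

lemma pstar_zero (δ : ℝ) (w : ℝ → ℝ) (K : ℕ) (s : ℕ → ℝ) : pstar δ w K s 0 = 0 := by
  unfold pstar; rw [if_pos rfl]

lemma impl_pstar {δ : ℝ} (hδ0 : 0 < δ) (hδ1 : δ < 1) {π w C : ℝ → ℝ} {K : ℕ} (hK : 2 ≤ K)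
    (hπm : StrictMonoOn π (Set.Icc 0 1)) (hwa : StrictAntiOn w (Set.Icc 0 1))
    (hCa : StrictAntiOn C (Set.Icc 0 1))
    {s : ℕ → ℝ} (hb : ∀ t ≤ K, s t ∈ Set.Icc (0:ℝ) 1) (h0 : s 0 = 0)
    (hmono : ∀ t < K, s t ≤ s (t + 1))
    (hA : ∀ t, 1 ≤ t → t ≤ K - 1 → 0 ≤ Af δ π w C K s t) :
    ImplementableR δ π w C K s (pstar δ w K s) := by
  have hδne : δ ≠ 1 := ne_of_lt hδ1
  refine ⟨hb, h0, hmono, fun t ht => pstar_nonneg hδ0.le hwa hb hmono ht, ?_, ?_⟩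
  · intro t ht
    rw [bound_eq hδne]
    have hAA : 0 ≤ Af δ π w C K s t := by
      rcases Nat.eq_zero_or_pos t with rfl | htpos
      · have hrec := Af_rec δ π w C s (by omega : 0 + 2 ≤ K)
        have hB0 : 0 ≤ Bf δ π w C K s 0 := by
          unfold Bf
          rw [pstar_zero]
          have hπle : π (s 0) ≤ π (s (0 + 1)) :=
            hπm.monotoneOn (hb 0 (by omega)) (hb 1 (by omega)) (hmono 0 (by omega))
          have hCle : C (s (0 + 1)) ≤ C (s 0) :=
            hCa.antitoneOn (hb 0 (by omega)) (hb 1 (by omega)) (hmono 0 (by omega))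
          have e1 : 0 ≤ δ * q δ (K - 0 - 1) * (π (s (0 + 1)) - π (s 0)) :=
            mul_nonneg (mul_nonneg hδ0.le (q_nonneg hδ0.le _)) (by linarith)
          have e2 : 0 ≤ δ ^ (K - 1 - 0) * (C (s 0) - C (s (0 + 1))) :=
            mul_nonneg (pow_nonneg hδ0.le _) (by linarith)
          linarith
        have hA1 := hA 1 le_rfl (by omega)
        rw [show (0:ℕ) + 1 = 1 from rfl] at hrec
        nlinarith
      · exact hA t htpos (by omega)
    unfold Af dev at hAA
    linarith
  · intro t ht
    rw [bound_eq hδne, WR_pstar δ w K s (by omega : 1 ≤ t + 1) (by omega),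
      show t + 1 - 1 = t by omega, show K - (t + 1) = K - t - 1 by omega]

lemma Pi_le_pstar {δ : ℝ} (hδ0 : 0 < δ) (hδ1 : δ < 1) {π w C : ℝ → ℝ} {K : ℕ} (hK : 2 ≤ K)
    {s p : ℕ → ℝ} (himpl : ImplementableR δ π w C K s p) :
    PiR δ π C K s p 0 ≤ PiR δ π C K s (pstar δ w K s) 0 := by
  obtain ⟨hb, h0, hmono, hp, hPIC, hEIC⟩ := himpl
  have hδne : δ ≠ 1 := ne_of_lt hδ1
  have hW1 : WR δ w K s (pstar δ w K s) 1 ≤ WR δ w K s p 1 := by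
    have h := hEIC 0 (by omega)
    rw [bound_eq hδne] at h
    rw [WR_pstar δ w K s le_rfl (by omega)]
    simpa using h
  have hW0 : WR δ w K s (pstar δ w K s) 0 ≤ WR δ w K s p 0 := by
    rw [WR_rec δ w K s _ (by omega : 0 < K), WR_rec δ w K s _ (by omega : 0 < K)]
    have hp0 := hp 0 (by omega)
    rw [pstar_zero, show (0:ℕ) + 1 = 1 from rfl]
    nlinarith [hW1]
  have h2 := sum_PW δ π w C K s p 0
  have h3 := sum_PW δ π w C K s (pstar δ w K s) 0
  linarith

lemma Af_nonneg_of_impl {δ : ℝ} (hδ0 : 0 < δ) (hδ1 : δ < 1) {π w C : ℝ → ℝ} {K : ℕ}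
    (hK : 2 ≤ K) {s p : ℕ → ℝ} (himpl : ImplementableR δ π w C K s p) :
    ∀ t, 1 ≤ t → t ≤ K - 1 → 0 ≤ Af δ π w C K s t := by
  obtain ⟨hb, h0, hmono, hp, hPIC, hEIC⟩ := himpl
  have hδne : δ ≠ 1 := ne_of_lt hδ1
  intro t h1t h2t
  have hWt : WR δ w K s (pstar δ w K s) t ≤ WR δ w K s p t := by
    have h := hEIC (t - 1) (by omega)
    rw [bound_eq hδne, show t - 1 + 1 = t by omega,
      show K - (t - 1) - 1 = K - t by omega] at h
    rw [WR_pstar δ w K s h1t (by omega)]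
    exact h
  have hsum_p := sum_PW δ π w C K s p t
  have hsum_q := sum_PW δ π w C K s (pstar δ w K s) t
  have hdev := hPIC t (by omega)
  rw [bound_eq hδne] at hdev
  unfold Af dev
  linarith

lemma WR0_pstar (δ : ℝ) (w : ℝ → ℝ) {K : ℕ} (hK : 1 ≤ K) (s : ℕ → ℝ) :
    WR δ w K s (pstar δ w K s) 0 = q δ K * w (s 0) := by
  rw [WR_rec δ w K s _ (by omega : 0 < K), show (0:ℕ) + 1 = 1 from rfl,
    WR_pstar δ w K s le_rfl (by omega), pstar_zero,
    show (1:ℕ) - 1 = 0 from rfl]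
  have hq := q_succ δ (K - 1)
  rw [show K - 1 + 1 = K by omega] at hq
  rw [hq]
  ring

lemma Vex_eq (δ : ℝ) (π w C : ℝ → ℝ) {K : ℕ} (hK : 1 ≤ K) (s : ℕ → ℝ) :
    PiR δ π C K s (pstar δ w K s) 0 = Vex δ π w C K s := by
  have h1 := sum_PW δ π w C K s (pstar δ w K s) 0
  simp only [Nat.sub_zero, ← Finset.range_eq_Ico] at h1
  have h2 := WR0_pstar δ w hK s
  unfold Vex
  linarith

lemma Pi0_eq (δ : ℝ) (π w C : ℝ → ℝ) {K : ℕ} (hK : 2 ≤ K) (s : ℕ → ℝ) :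
    PiR δ π C K s (pstar δ w K s) 0
      = π (s 0) + δ * (dev δ π C K s 1 + Af δ π w C K s 1) := by
  rw [PiR_rec δ π C K s _ (by omega : 0 + 1 < K)]
  unfold Af
  rw [pstar_zero, show (0:ℕ) + 1 = 1 from rfl]
  ring

lemma PiR_congr_p {δ : ℝ} {π C : ℝ → ℝ} {K : ℕ} {s p p' : ℕ → ℝ}
    (hp : ∀ τ < K, p τ = p' τ) (t : ℕ) :
    PiR δ π C K s p t = PiR δ π C K s p' t := by
  unfold PiR
  congr 1
  apply Finset.sum_congr rfl
  intro τ hτ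
  rw [hp τ (Finset.mem_Ico.mp hτ).2]

lemma WR_congr_p {δ : ℝ} {w : ℝ → ℝ} {K : ℕ} {s p p' : ℕ → ℝ}
    (hp : ∀ τ < K, p τ = p' τ) (t : ℕ) :
    WR δ w K s p t = WR δ w K s p' t := by
  unfold WR
  apply Finset.sum_congr rfl
  intro τ hτ
  rw [hp τ (Finset.mem_Ico.mp hτ).2]

lemma impl_congr_p {δ : ℝ} {π w C : ℝ → ℝ} {K : ℕ} {s p p' : ℕ → ℝ}
    (hp : ∀ τ < K, p τ = p' τ) (h : ImplementableR δ π w C K s p) :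
    ImplementableR δ π w C K s p' := by
  obtain ⟨hb, h0, hmono, hpn, hPIC, hEIC⟩ := h
  refine ⟨hb, h0, hmono, ?_, ?_, ?_⟩
  · intro t ht; rw [← hp t ht]; exact hpn t ht
  · intro t ht; rw [← PiR_congr_p hp t]; exact hPIC t ht
  · intro t ht; rw [← WR_congr_p hp (t + 1)]; exact hEIC t ht

lemma Aex_congr {δ : ℝ} {π w C : ℝ → ℝ} {K : ℕ} {s s' : ℕ → ℝ}
    (h : ∀ τ ≤ K, s τ = s' τ) {t : ℕ} (ht : t ≤ K) :
    Aex δ π w C K s t = Aex δ π w C K s' t := by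
  unfold Aex
  have hsum : (∑ τ ∈ Finset.Ico t K, δ ^ (τ - t) * (π (s τ) + w (s τ)))
      = ∑ τ ∈ Finset.Ico t K, δ ^ (τ - t) * (π (s' τ) + w (s' τ)) :=
    Finset.sum_congr rfl fun τ hτ => by rw [h τ (le_of_lt (Finset.mem_Ico.mp hτ).2)]
  rw [hsum, h K le_rfl, h (t - 1) (by omega), h t ht]

lemma Vex_congr {δ : ℝ} {π w C : ℝ → ℝ} {K : ℕ} {s s' : ℕ → ℝ}
    (h : ∀ τ ≤ K, s τ = s' τ) :
    Vex δ π w C K s = Vex δ π w C K s' := by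
  unfold Vex
  have hsum : (∑ τ ∈ Finset.range K, δ ^ τ * (π (s τ) + w (s τ)))
      = ∑ τ ∈ Finset.range K, δ ^ τ * (π (s' τ) + w (s' τ)) :=
    Finset.sum_congr rfl fun τ hτ => by
      rw [h τ (le_of_lt (Finset.mem_range.mp hτ))]
  rw [hsum, h K le_rfl, h 0 (by omega)]

lemma Aex_eq_Af {δ : ℝ} (π w C : ℝ → ℝ) {K : ℕ} (s : ℕ → ℝ) {t : ℕ}
    (h1 : 1 ≤ t) (h2 : t ≤ K - 1) (hK : 2 ≤ K) :
    Aex δ π w C K s t = Af δ π w C K s t := by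
  unfold Aex Af dev
  have h3 := sum_PW δ π w C K s (pstar δ w K s) t
  have h4 := WR_pstar δ w K s h1 (by omega)
  linarith

lemma Aex_mono {δ : ℝ} (hδ0 : 0 ≤ δ) {π w C : ℝ → ℝ} {K : ℕ}
    (hGm : StrictMonoOn (fun x => π x + w x) (Set.Icc 0 1))
    (hwa : StrictAntiOn w (Set.Icc 0 1)) (hCa : StrictAntiOn C (Set.Icc 0 1))
    {s s' : ℕ → ℝ}
    (hb : ∀ τ ≤ K, s τ ∈ Set.Icc (0:ℝ) 1) (hb' : ∀ τ ≤ K, s' τ ∈ Set.Icc (0:ℝ) 1)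
    (hle : ∀ τ ≤ K, s τ ≤ s' τ) {t : ℕ} (ht : t ≤ K) (heq : s t = s' t) :
    Aex δ π w C K s t ≤ Aex δ π w C K s' t := by
  unfold Aex
  have hsum : (∑ τ ∈ Finset.Ico t K, δ ^ (τ - t) * (π (s τ) + w (s τ)))
      ≤ ∑ τ ∈ Finset.Ico t K, δ ^ (τ - t) * (π (s' τ) + w (s' τ)) := by
    apply Finset.sum_le_sum
    intro τ hτ
    have hτK : τ ≤ K := le_of_lt (Finset.mem_Ico.mp hτ).2
    exact mul_le_mul_of_nonneg_left
      (hGm.monotoneOn (hb τ hτK) (hb' τ hτK) (hle τ hτK)) (pow_nonneg hδ0 _)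
  have hC : C (s' K) ≤ C (s K) :=
    hCa.antitoneOn (hb K le_rfl) (hb' K le_rfl) (hle K le_rfl)
  have hw : w (s' (t - 1)) ≤ w (s (t - 1)) :=
    hwa.antitoneOn (hb _ (by omega)) (hb' _ (by omega)) (hle _ (by omega))
  have hpow : (0:ℝ) ≤ δ ^ (K - 1 - t) := pow_nonneg hδ0 _
  have hqn : 0 ≤ q δ (K - t) := q_nonneg hδ0 _
  rw [heq]
  have e1 := mul_le_mul_of_nonneg_left hC hpow
  have e2 := mul_le_mul_of_nonneg_left hw hqn
  linarith

lemma maximizer_Af_zero {δ : ℝ} (hδ0 : 0 < δ) (hδ1 : δ < 1) {π w C : ℝ → ℝ} {K : ℕ} (hK : 2 ≤ K)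
    (hπc : ContinuousOn π (Set.Icc 0 1)) (hwc : ContinuousOn w (Set.Icc 0 1))
    (hCc : ContinuousOn C (Set.Icc 0 1))
    (hπm : StrictMonoOn π (Set.Icc 0 1)) (hwa : StrictAntiOn w (Set.Icc 0 1))
    (hGm : StrictMonoOn (fun x => π x + w x) (Set.Icc 0 1)) (hCa : StrictAntiOn C (Set.Icc 0 1))
    {s : ℕ → ℝ} (hb : ∀ τ ≤ K, s τ ∈ Set.Icc (0:ℝ) 1) (h0 : s 0 = 0)
    (hmono : ∀ t < K, s t ≤ s (t + 1))
    (hA : ∀ t, 1 ≤ t → t ≤ K - 1 → 0 ≤ Af δ π w C K s t)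
    (hmax : ∀ s' : ℕ → ℝ, (∀ τ ≤ K, s' τ ∈ Set.Icc (0:ℝ) 1) → s' 0 = 0 →
      (∀ t < K, s' t ≤ s' (t + 1)) → (∀ t, 1 ≤ t → t ≤ K - 1 → 0 ≤ Af δ π w C K s' t) →
      Vex δ π w C K s' ≤ Vex δ π w C K s) :
    ∀ t, 1 ≤ t → t ≤ K - 1 → Af δ π w C K s t = 0 := by
  by_contra hcon
  push_neg at hcon
  obtain ⟨t0, h1t0, h2t0, hne⟩ := hcon
  obtain ⟨t, ⟨h1t, h2t, hAt⟩, hle_max⟩ :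
      ∃ t, (1 ≤ t ∧ t ≤ K - 1 ∧ 0 < Af δ π w C K s t) ∧
        ∀ τ, 1 ≤ τ → τ ≤ K - 1 → 0 < Af δ π w C K s τ → τ ≤ t := by
    classical
    set F := (Finset.Icc 1 (K - 1)).filter (fun t => 0 < Af δ π w C K s t) with hF
    have hFne : F.Nonempty := ⟨t0, by
      simp only [hF, Finset.mem_filter, Finset.mem_Icc]
      exact ⟨⟨h1t0, h2t0⟩, lt_of_le_of_ne (hA t0 h1t0 h2t0) (Ne.symm hne)⟩⟩
    refine ⟨F.max' hFne, ?_, ?_⟩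
    · have h := F.max'_mem hFne
      simp only [hF, Finset.mem_filter, Finset.mem_Icc] at h
      exact ⟨h.1.1, h.1.2, h.2⟩
    · intro τ hτ1 hτ2 hτ3
      exact F.le_max' τ (by
        simp only [hF, Finset.mem_filter, Finset.mem_Icc]
        exact ⟨⟨hτ1, hτ2⟩, hτ3⟩)
  have hzero : ∀ τ, t < τ → τ ≤ K - 1 → Af δ π w C K s τ = 0 := by
    intro τ hτ1 hτ2
    rcases lt_or_eq_of_le (hA τ (by omega) hτ2) with h | h
    · exfalso
      have := hle_max τ (by omega) hτ2 h
      omega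
    · exact h.symm
  have hst : s t < s (t + 1) := by
    rcases lt_or_eq_of_le (hmono t (by omega)) with h | h
    · exact h
    · exfalso
      have hps : 0 ≤ pstar δ w K s t := pstar_nonneg hδ0.le hwa hb hmono (by omega)
      rcases eq_or_lt_of_le h2t with heq | hlt
      · rw [heq] at hAt h hps
        rw [show K - 1 + 1 = K by omega] at h
        rw [Af_last δ π w C hK s, ← h] at hAt
        linarith
      · have hrec := Af_rec δ π w C s (by omega : t + 2 ≤ K)
        have hz := hzero (t + 1) (by omega) (by omega)
        have hBf : Bf δ π w C K s t ≤ 0 := by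
          unfold Bf
          rw [← h]
          have hr : δ * q δ (K - t - 1) * (π (s t) - π (s t))
              + δ ^ (K - 1 - t) * (C (s t) - C (s t)) - pstar δ w K s t
              = -pstar δ w K s t := by ring
          rw [hr]
          linarith
        rw [hz] at hrec
        linarith
  have hs1 : s (t + 1) ≤ 1 := (hb (t + 1) (by omega)).2
  have hs0 : 0 ≤ s t := (hb t (by omega)).1
  set g : ℝ → ℝ := fun y => Aex δ π w C K (Function.update s t y) t with hg
  have hgeq : g = fun y => (π y + w y)
      + (∑ τ ∈ Finset.Ico (t + 1) K, δ ^ (τ - t) * (π (s τ) + w (s τ)))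
      - δ ^ (K - 1 - t) * C (s K) - q δ (K - t) * w (s (t - 1))
      - q δ (K - t) * π y + δ ^ (K - 1 - t) * C y := by
    funext y
    simp only [hg]
    unfold Aex
    rw [Finset.sum_eq_sum_Ico_succ_bot (show t < K by omega),
      Nat.sub_self, pow_zero, Function.update_self,
      Function.update_of_ne (show K ≠ t by omega),
      Function.update_of_ne (show t - 1 ≠ t by omega)]
    have hc : ∀ τ ∈ Finset.Ico (t + 1) K,
        δ ^ (τ - t) * (π (Function.update s t y τ) + w (Function.update s t y τ))
          = δ ^ (τ - t) * (π (s τ) + w (s τ)) := by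
      intro τ hτ
      have := (Finset.mem_Ico.mp hτ).1
      rw [Function.update_of_ne (show τ ≠ t by omega)]
    rw [Finset.sum_congr rfl hc]
    ring
  have hgc : ContinuousOn g (Set.Icc 0 1) := by
    rw [hgeq]
    exact (((((hπc.add hwc).add continuousOn_const).sub continuousOn_const).sub
      continuousOn_const).sub (continuousOn_const.mul hπc)).add
      (continuousOn_const.mul hCc)
  have hgt : 0 < g (s t) := by
    simp only [hg, Function.update_eq_self]
    rw [Aex_eq_Af π w C s h1t h2t hK]
    exact hAt
  have hmemIcc : s t ∈ Set.Icc (0:ℝ) 1 := ⟨hs0, le_trans hst.le hs1⟩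
  have hcw : ContinuousWithinAt g (Set.Icc 0 1) (s t) := hgc (s t) hmemIcc
  have hev : g ⁻¹' (Set.Ioi 0) ∈ nhdsWithin (s t) (Set.Icc 0 1) := hcw (Ioi_mem_nhds hgt)
  have hsub : Set.Ioo (s t) (s (t + 1)) ⊆ Set.Icc 0 1 := fun y hy =>
    ⟨le_trans hs0 hy.1.le, le_trans hy.2.le hs1⟩
  have hev' : g ⁻¹' (Set.Ioi 0) ∈ nhdsWithin (s t) (Set.Ioo (s t) (s (t + 1))) :=
    nhdsWithin_mono _ hsub hev
  have hnb : (nhdsWithin (s t) (Set.Ioo (s t) (s (t + 1)))).NeBot := by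
    apply mem_closure_iff_nhdsWithin_neBot.mp
    rw [closure_Ioo hst.ne]
    exact ⟨le_rfl, hst.le⟩
  obtain ⟨y, hy1, hy2⟩ := (Filter.eventually_iff.mpr hev').and
    (eventually_mem_nhdsWithin) |>.exists
  have hy1' : 0 < g y := hy1
  have hyIoo : y ∈ Set.Ioo (s t) (s (t + 1)) := hy2
  have hyIcc : y ∈ Set.Icc (0:ℝ) 1 := ⟨le_trans hs0 hyIoo.1.le, le_trans hyIoo.2.le hs1⟩
  have hb' : ∀ τ ≤ K, Function.update s t y τ ∈ Set.Icc (0:ℝ) 1 := by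
    intro τ hτ
    rcases eq_or_ne τ t with he0 | hne'
    · rw [he0, Function.update_self]; exact hyIcc
    · rw [Function.update_of_ne hne']; exact hb τ hτ
  have h0' : Function.update s t y 0 = 0 := by
    rw [Function.update_of_ne (show (0:ℕ) ≠ t by omega)]; exact h0
  have hmono' : ∀ τ, τ < K → Function.update s t y τ ≤ Function.update s t y (τ + 1) := by
    intro τ hτ
    rcases eq_or_ne τ t with he0 | hne1
    · rw [he0, Function.update_self, Function.update_of_ne (show t + 1 ≠ t by omega)]
      exact hyIoo.2.le
    · rcases eq_or_ne (τ + 1) t with he | hne2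
      · rw [Function.update_of_ne hne1, he, Function.update_self]
        have h1 : s τ ≤ s t := by rw [← he]; exact hmono τ hτ
        exact le_trans h1 hyIoo.1.le
      · rw [Function.update_of_ne hne1, Function.update_of_ne hne2]
        exact hmono τ hτ
  have hle' : ∀ τ ≤ K, s τ ≤ Function.update s t y τ := by
    intro τ hτ
    rcases eq_or_ne τ t with he0 | hne'
    · rw [he0, Function.update_self]; exact hyIoo.1.le
    · rw [Function.update_of_ne hne']
  have hA' : ∀ τ, 1 ≤ τ → τ ≤ K - 1 → 0 ≤ Af δ π w C K (Function.update s t y) τ := by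
    intro τ h1τ h2τ
    rw [← Aex_eq_Af π w C _ h1τ h2τ hK]
    rcases eq_or_ne τ t with he0 | hne'
    · rw [he0]; exact hy1'.le
    · have heq' : s τ = Function.update s t y τ := (Function.update_of_ne hne' y s).symm
      have hm := Aex_mono hδ0.le hGm hwa hCa hb hb' hle' (show τ ≤ K by omega) heq'
      have hAτ := hA τ h1τ h2τ
      rw [← Aex_eq_Af π w C s h1τ h2τ hK] at hAτ
      linarith
  have hV : Vex δ π w C K s < Vex δ π w C K (Function.update s t y) := by
    unfold Vex
    rw [Function.update_of_ne (show K ≠ t by omega),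
      Function.update_of_ne (show (0:ℕ) ≠ t by omega)]
    have hdiff : (∑ τ ∈ Finset.range K, δ ^ τ * (π (Function.update s t y τ) + w (Function.update s t y τ)))
        - (∑ τ ∈ Finset.range K, δ ^ τ * (π (s τ) + w (s τ)))
        = δ ^ t * ((π y + w y) - (π (s t) + w (s t))) := by
      rw [← Finset.sum_sub_distrib]
      rw [Finset.sum_eq_single t]
      · rw [Function.update_self]; ring
      · intro b _ hbne
        rw [Function.update_of_ne hbne]; ring
      · intro habs
        exact absurd (Finset.mem_range.mpr (show t < K by omega)) habs
    have hstrict : π (s t) + w (s t) < π y + w y := hGm hmemIcc hyIcc hyIoo.1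
    have hpow : (0:ℝ) < δ ^ t := pow_pos hδ0 t
    nlinarith [hdiff]
  have := hmax (Function.update s t y) hb' h0' hmono' hA'
  linarith

lemma sum_pow_Ico (δ : ℝ) (t K : ℕ) : ∑ τ ∈ Finset.Ico t K, δ ^ (τ - t) = q δ (K - t) := by
  rw [Finset.sum_Ico_eq_sum_range]
  unfold q
  apply Finset.sum_congr rfl
  intro i _
  rw [show t + i - t = i by omega]

lemma exists_maximizer {δ : ℝ} (hδ0 : 0 < δ) (hδ1 : δ < 1) {π w C : ℝ → ℝ} {K : ℕ} (hK : 2 ≤ K)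
    (hπc : ContinuousOn π (Set.Icc 0 1)) (hwc : ContinuousOn w (Set.Icc 0 1))
    (hCc : ContinuousOn C (Set.Icc 0 1)) :
    ∃ x : ℕ → ℝ, ((∀ τ ≤ K, x τ ∈ Set.Icc (0:ℝ) 1) ∧ x 0 = 0 ∧ (∀ t < K, x t ≤ x (t + 1)) ∧
        (∀ t, 1 ≤ t → t ≤ K - 1 → 0 ≤ Af δ π w C K x t)) ∧
      ∀ x' : ℕ → ℝ, (∀ τ ≤ K, x' τ ∈ Set.Icc (0:ℝ) 1) → x' 0 = 0 →
        (∀ t < K, x' t ≤ x' (t + 1)) →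
        (∀ t, 1 ≤ t → t ≤ K - 1 → 0 ≤ Af δ π w C K x' t) →
        Vex δ π w C K x' ≤ Vex δ π w C K x := by
  classical
  set box : Set (ℕ → ℝ) := Set.pi Set.univ (fun τ => if τ ≤ K then Set.Icc (0:ℝ) 1 else {0})
    with hbox
  have hboxmem : ∀ x ∈ box, ∀ i ≤ K, x i ∈ Set.Icc (0:ℝ) 1 := by
    intro x hx i hi
    have := hx i (Set.mem_univ i)
    simpa [if_pos hi] using this
  have hboxc : IsCompact box := isCompact_univ_pi (fun τ => by
    split_ifs
    exacts [isCompact_Icc, isCompact_singleton])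
  have hboxcl : IsClosed box := isClosed_set_pi (fun τ _ => by
    split_ifs
    exacts [isClosed_Icc, isClosed_singleton])
  have hcoord : ∀ (f : ℝ → ℝ), ContinuousOn f (Set.Icc 0 1) → ∀ i, i ≤ K →
      ContinuousOn (fun x : ℕ → ℝ => f (x i)) box := by
    intro f hf i hi
    apply hf.comp (continuous_apply i).continuousOn
    intro x hx
    exact hboxmem x hx i hi
  have hAexc : ∀ t, 1 ≤ t → t ≤ K - 1 → ContinuousOn (fun x => Aex δ π w C K x t) box := by
    intro t h1 h2
    unfold Aex
    apply ContinuousOn.add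
    apply ContinuousOn.sub
    apply ContinuousOn.sub
    apply ContinuousOn.sub
    · apply continuousOn_finset_sum
      intro τ hτ
      have hτK : τ ≤ K := le_of_lt (Finset.mem_Ico.mp hτ).2
      exact continuousOn_const.mul ((hcoord π hπc τ hτK).add (hcoord w hwc τ hτK))
    · exact continuousOn_const.mul (hcoord C hCc K le_rfl)
    · exact continuousOn_const.mul (hcoord w hwc (t - 1) (by omega))
    · exact continuousOn_const.mul (hcoord π hπc t (by omega))
    · exact continuousOn_const.mul (hcoord C hCc t (by omega))
  have hVexc : ContinuousOn (fun x => Vex δ π w C K x) box := by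
    unfold Vex
    apply ContinuousOn.sub
    apply ContinuousOn.sub
    · apply continuousOn_finset_sum
      intro τ hτ
      have hτK : τ ≤ K := le_of_lt (Finset.mem_range.mp hτ)
      exact continuousOn_const.mul ((hcoord π hπc τ hτK).add (hcoord w hwc τ hτK))
    · exact continuousOn_const.mul (hcoord C hCc K le_rfl)
    · exact continuousOn_const.mul (hcoord w hwc 0 (by omega))
  set T : Set (ℕ → ℝ) := (box ∩ {x | x 0 = 0} ∩ {x | ∀ t, t < K → x t ≤ x (t + 1)}) ∩
      ⋂ (t : ℕ), (if 1 ≤ t ∧ t ≤ K - 1 then box ∩ {x | 0 ≤ Aex δ π w C K x t} else box)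
    with hT
  have hTsub : T ⊆ box := fun x hx => hx.1.1.1
  have hTclosed : IsClosed T := by
    apply IsClosed.inter
    · apply IsClosed.inter
      · exact hboxcl.inter (isClosed_eq (continuous_apply 0) continuous_const)
      · have : {x : ℕ → ℝ | ∀ t, t < K → x t ≤ x (t + 1)}
            = ⋂ (t : ℕ), {x : ℕ → ℝ | t < K → x t ≤ x (t + 1)} := by
          ext x; simp
        rw [this]
        apply isClosed_iInter
        intro t
        by_cases h : t < K
        · simp only [h, forall_true_left]
          exact isClosed_le (continuous_apply t) (continuous_apply (t + 1))
        · simp only [eq_false h, false_implies, Set.setOf_true]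
          exact isClosed_univ
    · apply isClosed_iInter
      intro t
      split_ifs with h
      · have := (hAexc t h.1 h.2).preimage_isClosed_of_isClosed hboxcl
          (isClosed_Ici (a := (0:ℝ)))
        convert this using 1
        rfl
      · exact hboxcl
  have hTcompact : IsCompact T := IsCompact.of_isClosed_subset hboxc hTclosed hTsub
  have hmemT : ∀ x : ℕ → ℝ, x ∈ T ↔ (x ∈ box ∧ x 0 = 0 ∧ (∀ t, t < K → x t ≤ x (t + 1)) ∧
      ∀ t, 1 ≤ t → t ≤ K - 1 → 0 ≤ Aex δ π w C K x t) := by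
    intro x
    constructor
    · rintro ⟨⟨⟨hx1, hx2⟩, hx3⟩, hx4⟩
      refine ⟨hx1, hx2, hx3, ?_⟩
      intro t h1 h2
      have := Set.mem_iInter.mp hx4 t
      rw [if_pos ⟨h1, h2⟩] at this
      exact this.2
    · rintro ⟨hx1, hx2, hx3, hx4⟩
      refine ⟨⟨⟨hx1, hx2⟩, hx3⟩, ?_⟩
      apply Set.mem_iInter.mpr
      intro t
      split_ifs with h
      · exact ⟨hx1, hx4 t h.1 h.2⟩
      · exact hx1
  have hTne : T.Nonempty := by
    refine ⟨fun _ => 0, (hmemT _).mpr ⟨?_, rfl, fun _ _ => le_rfl, ?_⟩⟩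
    · intro i _
      by_cases hi : i ≤ K
      · simp [hi]
      · simp [hi]
    · intro t h1 h2
      unfold Aex
      have hs : (∑ τ ∈ Finset.Ico t K, δ ^ (τ - t) * (π 0 + w 0))
          = q δ (K - t) * (π 0 + w 0) := by
        rw [← Finset.sum_mul, sum_pow_Ico]
      rw [hs]
      have : q δ (K - t) * (π 0 + w 0) - δ ^ (K - 1 - t) * C 0
          - q δ (K - t) * w 0 - q δ (K - t) * π 0 + δ ^ (K - 1 - t) * C 0 = 0 := by ring
      rw [this]
  obtain ⟨x, hxT, hxmax⟩ := hTcompact.exists_isMaxOn hTne (hVexc.mono hTsub)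
  obtain ⟨hx1, hx2, hx3, hx4⟩ := (hmemT x).mp hxT
  have hxb : ∀ τ ≤ K, x τ ∈ Set.Icc (0:ℝ) 1 := fun τ hτ => hboxmem x hx1 τ hτ
  refine ⟨x, ⟨hxb, hx2, hx3, ?_⟩, ?_⟩
  · intro t h1 h2
    rw [← Aex_eq_Af π w C x h1 h2 hK]
    exact hx4 t h1 h2
  · intro x' hb' h0' hmono' hA'
    set x'' : ℕ → ℝ := fun τ => if τ ≤ K then x' τ else 0 with hx''
    have hcong : ∀ τ ≤ K, x' τ = x'' τ := by
      intro τ hτ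
      simp only [hx'', if_pos hτ]
    have hx''T : x'' ∈ T := by
      apply (hmemT _).mpr
      refine ⟨?_, ?_, ?_, ?_⟩
      · intro i _
        simp only [hx'']
        split_ifs with hi
        · simpa using hb' i hi
        · simp
      · rw [← hcong 0 (by omega)]
        exact h0'
      · intro τ hτ
        rw [← hcong τ (by omega), ← hcong (τ + 1) (by omega)]
        exact hmono' τ hτ
      · intro τ h1 h2
        rw [← Aex_congr hcong (show τ ≤ K by omega)]
        rw [Aex_eq_Af π w C x' h1 h2 hK]
        exact hA' τ h1 h2
    have := hxmax hx''T
    have hveq : Vex δ π w C K x' = Vex δ π w C K x'' := Vex_congr hcong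
    rw [hveq]
    exact this

end Retire

open Retire

/-- Retirement program equivalence. -/
theorem retirement_program_equivalence
    (δ : ℝ) (hδ : δ ∈ Set.Ioo (0 : ℝ) 1) (K : ℕ) (hK : 2 ≤ K) (π w C : ℝ → ℝ)
    (hπc : ContinuousOn π (Set.Icc 0 1)) (hwc : ContinuousOn w (Set.Icc 0 1))
    (hπm : StrictMonoOn π (Set.Icc 0 1)) (hwa : StrictAntiOn w (Set.Icc 0 1))
    (hGm : StrictMonoOn (fun x => π x + w x) (Set.Icc 0 1))
    (hCc : ContinuousOn C (Set.Icc 0 1)) (hCa : StrictAntiOn C (Set.Icc 0 1))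
    (hC1 : C 1 = 0)
    (s p : ℕ → ℝ) (hs : ∀ t ≤ K, s t ∈ Set.Icc (0 : ℝ) 1) (h0 : s 0 = 0) :
    OptimalR δ π w C K s p ↔
      (RPstar δ w K s p ∧ (∀ t < K, s t ≤ s (t + 1)) ∧ RBE δ π w C K s ∧
        ∀ s' : ℕ → ℝ, (∀ t ≤ K, s' t ∈ Set.Icc (0 : ℝ) 1) → s' 0 = 0 →
          (∀ t < K, s' t ≤ s' (t + 1)) → RBE δ π w C K s' → s' 1 ≤ s 1) := by
  obtain ⟨hδ0, hδ1⟩ := hδ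
  have hδne : δ ≠ 1 := ne_of_lt hδ1
  -- global maximizer
  obtain ⟨m, ⟨hmb, hm0, hmm, hmA⟩, hmmax⟩ := exists_maximizer hδ0 hδ1 hK hπc hwc hCc
  have hmAz : ∀ t, 1 ≤ t → t ≤ K - 1 → Af δ π w C K m t = 0 :=
    maximizer_Af_zero hδ0 hδ1 hK hπc hwc hCc hπm hwa hGm hCa hmb hm0 hmm hmA hmmax
  have hmB := Af_to_Bf δ π w C hK m hmAz
  have hmRBE : RBE δ π w C K m := (RBE_iff hδne π w C K m).mpr hmB
  have hVm : Vex δ π w C K m = π 0 + δ * dev δ π C K m 1 := by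
    have e1 := Pi0_eq δ π w C hK m
    have e2 := Vex_eq δ π w C (by omega : 1 ≤ K) m
    rw [hm0] at e1
    rw [hmAz 1 le_rfl (by omega)] at e1
    linarith
  constructor
  · rintro ⟨himpl, hopt⟩
    obtain ⟨hb2, h02, hmono, hpn, hPIC, hEIC⟩ := id himpl
    have hAs := Af_nonneg_of_impl hδ0 hδ1 hK himpl
    have h_s_max : ∀ s' : ℕ → ℝ, (∀ τ ≤ K, s' τ ∈ Set.Icc (0:ℝ) 1) → s' 0 = 0 →
        (∀ t < K, s' t ≤ s' (t + 1)) →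
        (∀ t, 1 ≤ t → t ≤ K - 1 → 0 ≤ Af δ π w C K s' t) →
        Vex δ π w C K s' ≤ Vex δ π w C K s := by
      intro s' hb' h0' hm' hA'
      have himpl' := impl_pstar hδ0 hδ1 hK hπm hwa hCa hb' h0' hm' hA'
      have h1 := hopt s' (pstar δ w K s') himpl'
      have h2 := Pi_le_pstar hδ0 hδ1 hK himpl
      have e1 := Vex_eq δ π w C (by omega : 1 ≤ K) s'
      have e2 := Vex_eq δ π w C (by omega : 1 ≤ K) s
      linarith
    have hAz : ∀ t, 1 ≤ t → t ≤ K - 1 → Af δ π w C K s t = 0 :=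
      maximizer_Af_zero hδ0 hδ1 hK hπc hwc hCc hπm hwa hGm hCa hs h0 hmono hAs h_s_max
    have hBz := Af_to_Bf δ π w C hK s hAz
    have hRBEs : RBE δ π w C K s := (RBE_iff hδne π w C K s).mpr hBz
    have hPeq : PiR δ π C K s p 0 = PiR δ π C K s (pstar δ w K s) 0 :=
      le_antisymm (Pi_le_pstar hδ0 hδ1 hK himpl)
        (hopt s (pstar δ w K s) (impl_pstar hδ0 hδ1 hK hπm hwa hCa hs h0 hmono hAs))
    have hW0 : WR δ w K s p 0 = WR δ w K s (pstar δ w K s) 0 := by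
      have e1 := sum_PW δ π w C K s p 0
      have e2 := sum_PW δ π w C K s (pstar δ w K s) 0
      linarith
    have hWt : ∀ t, 1 ≤ t → t ≤ K - 1 → WR δ w K s p t = WR δ w K s (pstar δ w K s) t := by
      intro t h1 h2
      have hge : WR δ w K s (pstar δ w K s) t ≤ WR δ w K s p t := by
        have h := hEIC (t - 1) (by omega)
        rw [bound_eq hδne, show t - 1 + 1 = t by omega,
          show K - (t - 1) - 1 = K - t by omega] at h
        rw [WR_pstar δ w K s h1 (by omega)]
        exact h
      have hdev := hPIC t (by omega)
      rw [bound_eq hδne] at hdev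
      have hAt := hAz t h1 h2
      unfold Af dev at hAt
      have e1 := sum_PW δ π w C K s p t
      have e2 := sum_PW δ π w C K s (pstar δ w K s) t
      linarith
    have hpeq : ∀ t < K, pstar δ w K s t = p t := by
      intro t ht
      have e1 := WR_rec δ w K s p ht
      have e2 := WR_rec δ w K s (pstar δ w K s) ht
      have hDt : WR δ w K s p t = WR δ w K s (pstar δ w K s) t := by
        rcases Nat.eq_zero_or_pos t with rfl | hpos
        · exact hW0
        · exact hWt t hpos (by omega)
      have hDt1 : WR δ w K s p (t + 1) = WR δ w K s (pstar δ w K s) (t + 1) := by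
        rcases eq_or_lt_of_le (show t + 1 ≤ K by omega) with he | hlt
        · rw [he, WR_K, WR_K]
        · exact hWt (t + 1) (by omega) (by omega)
      rw [hDt1] at e1
      linarith
    refine ⟨⟨?_, ?_⟩, hmono, hRBEs, ?_⟩
    · rw [← hpeq 0 (by omega), pstar_zero]
    · intro t h1 h2
      rw [← hpeq t (by omega), bound_eq hδne]
      unfold pstar
      rw [if_neg (show ¬ t = 0 by omega)]
    · intro s' hb' h0' hm' hRBE'
      have hB' := (RBE_iff hδne π w C K s').mp hRBE'
      have hA'z := Bf_to_Af δ π w C hK s' hB'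
      have hA' : ∀ t, 1 ≤ t → t ≤ K - 1 → 0 ≤ Af δ π w C K s' t :=
        fun t ha hb' => le_of_eq (hA'z t ha hb').symm
      have hle := h_s_max s' hb' h0' hm' hA'
      have hv' : Vex δ π w C K s' = π 0 + δ * dev δ π C K s' 1 := by
        have e1 := Pi0_eq δ π w C hK s'
        have e2 := Vex_eq δ π w C (by omega : 1 ≤ K) s'
        rw [h0'] at e1
        rw [hA'z 1 le_rfl (by omega)] at e1
        linarith
      have hv : Vex δ π w C K s = π 0 + δ * dev δ π C K s 1 := by
        have e1 := Pi0_eq δ π w C hK s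
        have e2 := Vex_eq δ π w C (by omega : 1 ≤ K) s
        rw [h0] at e1
        rw [hAz 1 le_rfl (by omega)] at e1
        linarith
      by_contra hgt
      push_neg at hgt
      have hπlt : π (s 1) < π (s' 1) := hπm (hs 1 (by omega)) (hb' 1 (by omega)) hgt
      have hClt : C (s' 1) < C (s 1) := hCa (hs 1 (by omega)) (hb' 1 (by omega)) hgt
      have hq := q_pos hδ0 (show 1 ≤ K - 1 by omega)
      have hpow : (0:ℝ) < δ ^ (K - 1 - 1) := pow_pos hδ0 _
      have hdevlt : dev δ π C K s 1 < dev δ π C K s' 1 := by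
        unfold dev
        rw [show K - 1 = K - 1 by rfl]
        nlinarith
      nlinarith
  · rintro ⟨⟨hp0, hpf⟩, hmono, hRBEs, hmax1⟩
    have hB := (RBE_iff hδne π w C K s).mp hRBEs
    have hAz := Bf_to_Af δ π w C hK s hB
    have hA0 : ∀ t, 1 ≤ t → t ≤ K - 1 → 0 ≤ Af δ π w C K s t :=
      fun t ha hb => le_of_eq (hAz t ha hb).symm
    have hpeq : ∀ t < K, pstar δ w K s t = p t := by
      intro t ht
      rcases Nat.eq_zero_or_pos t with rfl | hpos
      · rw [pstar_zero, hp0]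
      · rw [hpf t hpos (by omega), bound_eq hδne]
        unfold pstar
        rw [if_neg (show ¬ t = 0 by omega)]
    have himplps := impl_pstar hδ0 hδ1 hK hπm hwa hCa hs h0 hmono hA0
    have himpl : ImplementableR δ π w C K s p := impl_congr_p hpeq himplps
    refine ⟨himpl, ?_⟩
    intro s' p' himpl'
    have hA' := Af_nonneg_of_impl hδ0 hδ1 hK himpl'
    have hb' := himpl'.1
    have h0' := himpl'.2.1
    have hm' := himpl'.2.2.1
    have c1 : PiR δ π C K s' p' 0 ≤ PiR δ π C K s' (pstar δ w K s') 0 :=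
      Pi_le_pstar hδ0 hδ1 hK himpl'
    have c2 := Vex_eq δ π w C (by omega : 1 ≤ K) s'
    have c3 : Vex δ π w C K s' ≤ Vex δ π w C K m := hmmax s' hb' h0' hm' hA'
    have hm1 : m 1 ≤ s 1 := hmax1 m hmb hm0 hmm hmRBE
    have hdevle : dev δ π C K m 1 ≤ dev δ π C K s 1 := by
      have e1 : π (m 1) ≤ π (s 1) :=
        hπm.monotoneOn (hmb 1 (by omega)) (hs 1 (by omega)) hm1
      have e2 : C (s 1) ≤ C (m 1) :=
        hCa.antitoneOn (hmb 1 (by omega)) (hs 1 (by omega)) hm1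
      have hq := q_nonneg hδ0.le (K - 1)
      have hpow : (0:ℝ) ≤ δ ^ (K - 1 - 1) := pow_nonneg hδ0.le _
      unfold dev
      nlinarith
    have hv : Vex δ π w C K s = π 0 + δ * dev δ π C K s 1 := by
      have e1 := Pi0_eq δ π w C hK s
      have e2 := Vex_eq δ π w C (by omega : 1 ≤ K) s
      rw [h0] at e1
      rw [hAz 1 le_rfl (by omega)] at e1
      linarith
    have c4 : Vex δ π w C K m ≤ Vex δ π w C K s := by
      rw [hVm, hv]
      nlinarith
    have c5 := Vex_eq δ π w C (by omega : 1 ≤ K) s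
    have c6 : PiR δ π C K s (pstar δ w K s) 0 = PiR δ π C K s p 0 := PiR_congr_p hpeq 0
    linarith
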